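/- Let M be a reduced cancellative monoid and Q a set of nonzero elements such that ⟨Q⟩ is factorial (freely generated by Q) and Q is linked to M. Then the following are equivalent: (1) every element of M has a unique expression as w + h with w ∈ Ap(M,Q) and h ∈ ⟨Q⟩; (2) for all distinct q,q' ∈ Q, q is coprime with q'; (3) for all w,w' ∈ Ap(M,Q), if w − w' lies in the group generated by Q, then w = w'. -/

import Mathlib

/-- `x ≤_M y` : divisibility in the additive monoid `M`. -/
def MDvd {M : Type*} [AddCancelCommMonoid M] (x y : M) : Prop := ∃ z : M, y = x + z

/-- The Apéry set `Ap(M,Q) = M \ (Q + M)`. -/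
def AperyM {M : Type*} [AddCancelCommMonoid M] (Q : Set M) : Set M :=
  {x | ∀ q ∈ Q, ¬ MDvd q x}

/-- The sum `Σ_{q ∈ Q} λ_q q` encoded by a finitely supported function. -/
def fsum {M : Type*} [AddCancelCommMonoid M] (f : M →₀ ℕ) : M :=
  f.sum fun q n => n • q

/-- `⟨Q⟩` is factorial, freely generated by `Q`. -/
def FreeOn {M : Type*} [AddCancelCommMonoid M] (Q : Set M) : Prop :=
  ∀ f g : M →₀ ℕ, (f.support : Set M) ⊆ Q → (g.support : Set M) ⊆ Q →
    fsum f = fsum g → f = g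

/-- `Q` is linked to `M`. -/
def LinkedM {M : Type*} [AddCancelCommMonoid M] (Q : Set M) : Prop :=
  ∀ x : M, x ≠ 0 → ∃ c : ℕ, ∀ f : M →₀ ℕ, (f.support : Set M) ⊆ Q →
    MDvd (fsum f) x → (f.sum fun _ n => n) ≤ c

/-- `x` is coprime with `y`: `x ≰_M y` and `x ≤_M m + y` implies `x ≤_M m`. -/
def CoprimeWith {M : Type*} [AddCancelCommMonoid M] (x y : M) : Prop :=
  ¬ MDvd x y ∧ ∀ m : M, MDvd x (m + y) → MDvd x m

set_option linter.unusedSectionVars false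

section Aux
variable {M : Type*} [AddCancelCommMonoid M] {Q : Set M}

lemma fsum_zero : fsum (0 : M →₀ ℕ) = 0 := Finsupp.sum_zero_index

lemma fsum_add (f g : M →₀ ℕ) : fsum (f + g) = fsum f + fsum g :=
  Finsupp.sum_add_index' (fun a => zero_nsmul a) (fun a m n => add_nsmul a m n)

lemma fsum_single (q : M) (n : ℕ) : fsum (Finsupp.single q n) = n • q :=
  Finsupp.sum_single_index (zero_nsmul q)

lemma deg_add (f g : M →₀ ℕ) :
    ((f + g).sum fun _ n => n) = (f.sum fun _ n => n) + (g.sum fun _ n => n) :=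
  Finsupp.sum_add_index' (fun _ => rfl) (fun _ _ _ => rfl)

lemma deg_single (q : M) (n : ℕ) : ((Finsupp.single q n).sum fun _ n => n) = n :=
  Finsupp.sum_single_index rfl

lemma deg_eq_zero {f : M →₀ ℕ} (h : (f.sum fun _ n => n) = 0) : f = 0 := by
  ext a
  by_cases ha : a ∈ f.support
  · simpa using Finset.sum_eq_zero_iff.mp h a ha
  · simpa using Finsupp.notMem_support_iff.mp ha

lemma split_single {g : M →₀ ℕ} {q : M} (hq : 1 ≤ g q) :
    g = (g - Finsupp.single q 1) + Finsupp.single q 1 := by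
  classical
  ext a
  rw [Finsupp.add_apply, Finsupp.tsub_apply]
  by_cases h : a = q
  · subst h; simp; omega
  · simp [Finsupp.single_eq_of_ne' (Ne.symm h)]

lemma sub_support_subset (g : M →₀ ℕ) (s : M →₀ ℕ) :
    ((g - s).support : Set M) ⊆ (g.support : Set M) := by
  intro a ha
  simp only [Finset.mem_coe, Finsupp.mem_support_iff, Finsupp.tsub_apply] at ha ⊢
  omega

lemma supp_add_subset {f g : M →₀ ℕ} (hf : (f.support : Set M) ⊆ Q)
    (hg : (g.support : Set M) ⊆ Q) : (((f + g).support : Finset M) : Set M) ⊆ Q := by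
  classical
  intro a ha
  rcases Finset.mem_union.mp (Finsupp.support_add ha) with h | h
  · exact hf h
  · exact hg h

lemma supp_single_subset {q : M} (hq : q ∈ Q) (n : ℕ) :
    (((Finsupp.single q n).support : Finset M) : Set M) ⊆ Q := by
  classical
  intro a ha
  have : a = q := by simpa using Finsupp.support_single_subset ha
  exact this ▸ hq

lemma fsum_mem_closure {f : M →₀ ℕ} (hf : (f.support : Set M) ⊆ Q) :
    fsum f ∈ AddSubmonoid.closure Q := by
  unfold fsum Finsupp.sum
  refine AddSubmonoid.sum_mem _ fun q hq => ?_
  exact nsmul_mem (AddSubmonoid.subset_closure (hf hq)) _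

lemma mem_closure_iff_fsum {x : M} :
    x ∈ AddSubmonoid.closure Q ↔ ∃ f : M →₀ ℕ, (f.support : Set M) ⊆ Q ∧ fsum f = x := by
  constructor
  · intro hx
    induction hx using AddSubmonoid.closure_induction with
    | mem q hq =>
        exact ⟨Finsupp.single q 1, supp_single_subset hq 1, by simp [fsum_single]⟩
    | zero => exact ⟨0, by simp, fsum_zero⟩
    | add a b _ _ ha hb =>
        obtain ⟨f, hf, rfl⟩ := ha
        obtain ⟨g, hg, rfl⟩ := hb
        exact ⟨f + g, supp_add_subset hf hg, fsum_add f g⟩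
  · rintro ⟨f, hf, rfl⟩
    exact fsum_mem_closure hf

lemma zero_mem_apery (hred : ∀ a b : M, a + b = 0 → a = 0)
    (h0 : (0 : M) ∉ Q) : (0 : M) ∈ AperyM Q := by
  rintro q hq ⟨z, hz⟩
  exact h0 (hred q z hz.symm ▸ hq)

lemma exists_decomp (hred : ∀ a b : M, a + b = 0 → a = 0) (h0 : (0 : M) ∉ Q)
    (hlink : LinkedM Q) (x : M) :
    ∃ w ∈ AperyM Q, ∃ f : M →₀ ℕ, (f.support : Set M) ⊆ Q ∧ x = w + fsum f := by
  by_cases hx : x = 0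
  · exact ⟨0, zero_mem_apery hred h0, 0, by simp, by simp [hx, fsum_zero]⟩
  obtain ⟨c, hc⟩ := hlink x hx
  suffices H : ∀ k : ℕ, ∀ f : M →₀ ℕ, ∀ w : M, (f.support : Set M) ⊆ Q →
      x = w + fsum f → c ≤ (f.sum fun _ n => n) + k →
      ∃ w' ∈ AperyM Q, ∃ g : M →₀ ℕ, (g.support : Set M) ⊆ Q ∧ x = w' + fsum g by
    exact H c 0 x (by simp) (by simp [fsum_zero]) (by simp)
  intro k
  induction k with
  | zero =>
    intro f w hf hx' hck
    by_cases hw : w ∈ AperyM Q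
    · exact ⟨w, hw, f, hf, hx'⟩
    · exfalso
      simp only [AperyM, Set.mem_setOf_eq, not_forall, not_not, exists_prop] at hw
      obtain ⟨q, hq, z, hz⟩ := hw
      have hxf' : x = fsum (f + Finsupp.single q 1) + z := by
        rw [fsum_add, fsum_single, one_nsmul, hx', hz]; abel
      have hle := hc (f + Finsupp.single q 1)
        (supp_add_subset hf (supp_single_subset hq 1)) ⟨z, hxf'⟩
      rw [deg_add, deg_single] at hle
      omega
  | succ k ih =>
    intro f w hf hx' hck
    by_cases hw : w ∈ AperyM Q
    · exact ⟨w, hw, f, hf, hx'⟩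
    · simp only [AperyM, Set.mem_setOf_eq, not_forall, not_not, exists_prop] at hw
      obtain ⟨q, hq, z, hz⟩ := hw
      have hxf' : x = z + fsum (f + Finsupp.single q 1) := by
        rw [fsum_add, fsum_single, one_nsmul, hx', hz]; abel
      refine ih (f + Finsupp.single q 1) z
        (supp_add_subset hf (supp_single_subset hq 1)) hxf' ?_
      rw [deg_add, deg_single]
      omega

lemma lemA (hcop : ∀ q ∈ Q, ∀ q' ∈ Q, q ≠ q' → CoprimeWith q q')
    {q : M} (hq : q ∈ Q) {w : M} (hw : w ∈ AperyM Q) :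
    ∀ n : ℕ, ∀ g : M →₀ ℕ, (g.sum fun _ n => n) ≤ n → (g.support : Set M) ⊆ Q →
      MDvd q (w + fsum g) → 1 ≤ g q := by
  intro n
  induction n with
  | zero =>
    intro g hg hsupp hd
    have : g = 0 := deg_eq_zero (Nat.le_zero.mp hg)
    subst this
    rw [fsum_zero, add_zero] at hd
    exact absurd hd (hw q hq)
  | succ n ih =>
    intro g hg hsupp hd
    by_cases hgz : g = 0
    · subst hgz
      rw [fsum_zero, add_zero] at hd
      exact absurd hd (hw q hq)
    obtain ⟨q', hq'⟩ : ∃ q', g q' ≠ 0 := by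
      by_contra h
      push_neg at h
      exact hgz (Finsupp.ext fun a => h a)
    by_cases hqq : q' = q
    · subst hqq; omega
    · have hq'Q : q' ∈ Q := hsupp (Finsupp.mem_support_iff.mpr hq')
      have hsplit : g = (g - Finsupp.single q' 1) + Finsupp.single q' 1 :=
        split_single (by omega)
      have hfs : fsum g = fsum (g - Finsupp.single q' 1) + q' := by
        conv_lhs => rw [hsplit]
        rw [fsum_add, fsum_single, one_nsmul]
      have hd' : MDvd q ((w + fsum (g - Finsupp.single q' 1)) + q') := by
        rwa [add_assoc, ← hfs]
      have hd'' : MDvd q (w + fsum (g - Finsupp.single q' 1)) :=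
        (hcop q hq q' hq'Q (fun h => hqq h.symm)).2 _ hd'
      have hdeg : ((g - Finsupp.single q' 1).sum fun _ n => n) ≤ n := by
        have : (g.sum fun _ n => n)
            = ((g - Finsupp.single q' 1).sum fun _ n => n) + 1 := by
          conv_lhs => rw [hsplit]
          rw [deg_add, deg_single]
        omega
      have h1 := ih (g - Finsupp.single q' 1) hdeg
        ((sub_support_subset g _).trans hsupp) hd''
      rw [Finsupp.tsub_apply, Finsupp.single_eq_of_ne' hqq] at h1
      omega

lemma unique_w (hcop : ∀ q ∈ Q, ∀ q' ∈ Q, q ≠ q' → CoprimeWith q q')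
    {w w' : M} (hw : w ∈ AperyM Q) (hw' : w' ∈ AperyM Q) :
    ∀ n : ℕ, ∀ f g : M →₀ ℕ, (f.sum fun _ n => n) ≤ n →
      (f.support : Set M) ⊆ Q → (g.support : Set M) ⊆ Q →
      w + fsum f = w' + fsum g → w = w' := by
  intro n
  induction n with
  | zero =>
    intro f g hf hsf hsg heq
    have : f = 0 := deg_eq_zero (Nat.le_zero.mp hf)
    subst this
    rw [fsum_zero, add_zero] at heq
    by_cases hgz : g = 0
    · subst hgz; rw [fsum_zero, add_zero] at heq; exact heq
    · exfalso
      obtain ⟨q', hq'⟩ : ∃ q', g q' ≠ 0 := by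
        by_contra h; push_neg at h; exact hgz (Finsupp.ext fun a => h a)
      have hq'Q : q' ∈ Q := hsg (Finsupp.mem_support_iff.mpr hq')
      have hsplit : g = (g - Finsupp.single q' 1) + Finsupp.single q' 1 :=
        split_single (by omega)
      refine hw q' hq'Q ⟨w' + fsum (g - Finsupp.single q' 1), ?_⟩
      conv_lhs => rw [heq, hsplit]
      rw [fsum_add, fsum_single, one_nsmul]
      abel
  | succ n ih =>
    intro f g hf hsf hsg heq
    by_cases hfz : f = 0
    · exact ih 0 g (by simp) (by simp) hsg (by rwa [hfz] at heq)
    obtain ⟨q, hq⟩ : ∃ q, f q ≠ 0 := by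
      by_contra h; push_neg at h; exact hfz (Finsupp.ext fun a => h a)
    have hqQ : q ∈ Q := hsf (Finsupp.mem_support_iff.mpr hq)
    have hsplitf : f = (f - Finsupp.single q 1) + Finsupp.single q 1 :=
      split_single (by omega)
    have hdvd : MDvd q (w' + fsum g) := by
      refine ⟨w + fsum (f - Finsupp.single q 1), ?_⟩
      rw [← heq]
      conv_lhs => rw [hsplitf]
      rw [fsum_add, fsum_single, one_nsmul]
      abel
    have hgq : 1 ≤ g q := lemA hcop hqQ hw' (g.sum fun _ n => n) g le_rfl hsg hdvd
    have hsplitg : g = (g - Finsupp.single q 1) + Finsupp.single q 1 :=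
      split_single hgq
    have heq' : w + fsum (f - Finsupp.single q 1)
        = w' + fsum (g - Finsupp.single q 1) := by
      have h2 : (w + fsum (f - Finsupp.single q 1)) + q
          = (w' + fsum (g - Finsupp.single q 1)) + q := by
        rw [hsplitf, hsplitg] at heq
        simp only [fsum_add, fsum_single, one_nsmul] at heq
        rw [add_assoc, add_assoc]
        exact heq
      exact add_right_cancel h2
    refine ih (f - Finsupp.single q 1) (g - Finsupp.single q 1) ?_
      ((sub_support_subset f _).trans hsf) ((sub_support_subset g _).trans hsg) heq'
    have : (f.sum fun _ n => n)
        = ((f - Finsupp.single q 1).sum fun _ n => n) + 1 := by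
      conv_lhs => rw [hsplitf]
      rw [deg_add, deg_single]
    omega

end Aux

/-- with `⟨Q⟩` factorial and `Q` linked to `M`, the following are
equivalent: (1) every element of `M` decomposes uniquely as `w + h`, `w ∈ Ap(M,Q)`,
`h ∈ ⟨Q⟩`; (2) distinct elements of `Q` are coprime; (3) elements of `Ap(M,Q)`
congruent modulo the group generated by `Q` are equal. -/
theorem apery_unique_decomposition_tfae {M : Type*} [AddCancelCommMonoid M]
    (hred : ∀ a b : M, a + b = 0 → a = 0)
    (Q : Set M) (h0 : (0 : M) ∉ Q) (hfree : FreeOn Q) (hlink : LinkedM Q) :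
    ((∀ x : M, ∃! p : M × M,
        p.1 ∈ AperyM Q ∧ p.2 ∈ AddSubmonoid.closure Q ∧ x = p.1 + p.2) ↔
      (∀ q ∈ Q, ∀ q' ∈ Q, q ≠ q' → CoprimeWith q q')) ∧
    ((∀ q ∈ Q, ∀ q' ∈ Q, q ≠ q' → CoprimeWith q q') ↔
      (∀ w ∈ AperyM Q, ∀ w' ∈ AperyM Q,
        (∃ h ∈ AddSubmonoid.closure Q, ∃ h' ∈ AddSubmonoid.closure Q,
          w + h = w' + h') → w = w')) := by
  have h23 : (∀ q ∈ Q, ∀ q' ∈ Q, q ≠ q' → CoprimeWith q q') →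
      (∀ w ∈ AperyM Q, ∀ w' ∈ AperyM Q,
        (∃ h ∈ AddSubmonoid.closure Q, ∃ h' ∈ AddSubmonoid.closure Q,
          w + h = w' + h') → w = w') := by
    rintro h2 w hw w' hw' ⟨h, hh, h', hh', heq⟩
    obtain ⟨f, hf, rfl⟩ := mem_closure_iff_fsum.mp hh
    obtain ⟨g, hg, rfl⟩ := mem_closure_iff_fsum.mp hh'
    exact unique_w h2 hw hw' (f.sum fun _ n => n) f g le_rfl hf hg heq
  have h31 : (∀ w ∈ AperyM Q, ∀ w' ∈ AperyM Q,
        (∃ h ∈ AddSubmonoid.closure Q, ∃ h' ∈ AddSubmonoid.closure Q,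
          w + h = w' + h') → w = w') →
      (∀ x : M, ∃! p : M × M,
        p.1 ∈ AperyM Q ∧ p.2 ∈ AddSubmonoid.closure Q ∧ x = p.1 + p.2) := by
    intro h3 x
    obtain ⟨w, hw, f, hf, hx⟩ := exists_decomp hred h0 hlink x
    refine ⟨(w, fsum f), ⟨hw, fsum_mem_closure hf, hx⟩, ?_⟩
    rintro ⟨w', h'⟩ ⟨hw', hh', hx'⟩
    have hww : w' = w :=
      h3 w' hw' w hw ⟨h', hh', fsum f, fsum_mem_closure hf, by rw [← hx', ← hx]⟩
    subst hww
    have hh : h' = fsum f := by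
      apply add_left_cancel (a := w')
      rw [← hx', ← hx]
    simp [hh]
  have h12 : (∀ x : M, ∃! p : M × M,
        p.1 ∈ AperyM Q ∧ p.2 ∈ AddSubmonoid.closure Q ∧ x = p.1 + p.2) →
      (∀ q ∈ Q, ∀ q' ∈ Q, q ≠ q' → CoprimeWith q q') := by
    intro h1 q hq q' hq' hne
    constructor
    · rintro ⟨z, hz⟩
      obtain ⟨w, hw, f, hf, hzd⟩ := exists_decomp hred h0 hlink z
      obtain ⟨p, _, hu⟩ := h1 q'
      have e1 : ((0 : M), q') = p :=
        hu ((0 : M), q') ⟨zero_mem_apery hred h0, AddSubmonoid.subset_closure hq',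
          (zero_add q').symm⟩
      have e2 : (w, q + fsum f) = p := by
        refine hu (w, q + fsum f) ⟨hw, ?_, ?_⟩
        · exact add_mem (AddSubmonoid.subset_closure hq) (fsum_mem_closure hf)
        · rw [hz, hzd]; dsimp only; ac_rfl
      have e3 : q' = q + fsum f := congrArg Prod.snd (e1.trans e2.symm)
      have e4 : fsum (Finsupp.single q' 1) = fsum (Finsupp.single q 1 + f) := by
        rw [fsum_add, fsum_single, fsum_single, one_nsmul, one_nsmul, ← e3]
      have e5 := hfree _ _ (supp_single_subset hq' 1)
        (supp_add_subset (supp_single_subset hq 1) hf) e4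
      have e6 := DFunLike.congr_fun e5 q
      rw [Finsupp.add_apply, Finsupp.single_eq_of_ne' (Ne.symm hne),
        Finsupp.single_eq_same] at e6
      omega
    · rintro m ⟨z, hz⟩
      obtain ⟨w, hw, f, hf, hm⟩ := exists_decomp hred h0 hlink m
      obtain ⟨w₂, hw₂, g, hg, hzd⟩ := exists_decomp hred h0 hlink z
      obtain ⟨p, _, hu⟩ := h1 (m + q')
      have e1 : (w, fsum (f + Finsupp.single q' 1)) = p := by
        refine hu _ ⟨hw, fsum_mem_closure (supp_add_subset hf (supp_single_subset hq' 1)), ?_⟩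
        rw [fsum_add, fsum_single, one_nsmul, hm]; abel
      have e2 : (w₂, fsum (g + Finsupp.single q 1)) = p := by
        refine hu _ ⟨hw₂, fsum_mem_closure (supp_add_subset hg (supp_single_subset hq 1)), ?_⟩
        rw [fsum_add, fsum_single, one_nsmul, hz, hzd]; dsimp only; ac_rfl
      have e3 : fsum (f + Finsupp.single q' 1) = fsum (g + Finsupp.single q 1) :=
        congrArg Prod.snd (e1.trans e2.symm)
      have e4 := hfree _ _ (supp_add_subset hf (supp_single_subset hq' 1))
        (supp_add_subset hg (supp_single_subset hq 1)) e3
      have e5 := DFunLike.congr_fun e4 q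
      rw [Finsupp.add_apply, Finsupp.add_apply, Finsupp.single_eq_of_ne' (Ne.symm hne),
        Finsupp.single_eq_same] at e5
      have hfq : 1 ≤ f q := by omega
      have hsplit : f = (f - Finsupp.single q 1) + Finsupp.single q 1 := split_single hfq
      refine ⟨w + fsum (f - Finsupp.single q 1), ?_⟩
      rw [hm]
      conv_lhs => rw [hsplit]
      rw [fsum_add, fsum_single, one_nsmul]
      abel
  exact ⟨⟨h12, fun h2 => h31 (h23 h2)⟩, ⟨h23, fun h3 => h12 (h31 h3)⟩⟩
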